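/- Monotonicity of the temperature in the gas phase: let c < 0, η > 0 and θ_s ∈ (0,1). Let Ψ : ℝ → ℝ be locally Lipschitz with Ψ(s) > 0 for s < 1 and Ψ(s) = 0 for s ≥ 1. Let θ : [0,∞) → ℝ be C² with θ(0) = θ_s, lim_{x→∞} θ(x) = 1, and η·c·θ′(x) + θ″(x) = −Ψ(θ(x)) for all x > 0. Then θ′(x) > 0 for all x > 0; in particular θ is strictly increasing on [0,∞) and θ(x) < 1 for all x ≥ 0, so θ is a bijection from [0,∞) onto [θ_s,1). -/

import Mathlib

open Set Filter Metric Real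
open scoped Topology NNReal


/-- Monotonicity of the temperature in the gas phase: with `c < 0` the dimensionless
regression velocity, `η > 0` the conductivity ratio and `θs ∈ (0,1)` the surface
temperature, if the dimensionless heat source `Ψ` is locally Lipschitz, positive below
`1` and zero at and above `1`, and the dimensionless temperature `θ` is C² on `[0,∞)`
with `θ(0) = θs`, `θ(x) → 1` as `x → ∞`, and `η·c·θ′ + θ″ = −Ψ(θ)` on `(0,∞)`, then
`θ′ > 0` on `(0,∞)`; in particular `θ` is strictly increasing on `[0,∞)`, `θ < 1`
everywhere, and `θ` is a bijection from `[0,∞)` onto `[θs,1)`. -/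
theorem gas_phase_temperature_monotone
    (c η θs : ℝ) (hc : c < 0) (hη : 0 < η) (hθs : θs ∈ Set.Ioo (0:ℝ) 1)
    (Ψ : ℝ → ℝ)
    (hΨlip : LocallyLipschitz Ψ)
    (hΨpos : ∀ s < (1:ℝ), 0 < Ψ s)
    (hΨzero : ∀ s ≥ (1:ℝ), Ψ s = 0)
    (θ : ℝ → ℝ)
    (hcont : ContinuousOn θ (Set.Ici 0))
    (hd1 : ∀ x > (0:ℝ), DifferentiableAt ℝ θ x)
    (hd2 : ∀ x > (0:ℝ), DifferentiableAt ℝ (deriv θ) x)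
    (h0 : θ 0 = θs)
    (hlim : Filter.Tendsto θ Filter.atTop (nhds 1))
    (hode : ∀ x > (0:ℝ), η * c * deriv θ x + deriv (deriv θ) x = -Ψ (θ x)) :
    (∀ x > (0:ℝ), 0 < deriv θ x) ∧
    StrictMonoOn θ (Set.Ici 0) ∧
    (∀ x ≥ (0:ℝ), θ x < 1) ∧
    Set.BijOn θ (Set.Ici 0) (Set.Ico θs 1) := by
  obtain ⟨hθs0, hθs1⟩ := hθs
  set a : ℝ := -(η * c) with ha_def
  have ha : 0 < a := by have := mul_neg_of_pos_of_neg hη hc; simp [ha_def]; linarith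
  set g : ℝ → ℝ := deriv θ with hg_def
  have hΨnn : ∀ s, 0 ≤ Ψ s := by
    intro s
    rcases lt_or_ge s 1 with h | h
    · exact (hΨpos s h).le
    · exact (hΨzero s h).ge
  have hΨ1 : Ψ 1 = 0 := hΨzero 1 le_rfl
  have hθ' : ∀ x > (0:ℝ), HasDerivAt θ (g x) x := fun x hx => (hd1 x hx).hasDerivAt
  have hg' : ∀ x > (0:ℝ), HasDerivAt g (a * g x - Ψ (θ x)) x := by
    intro x hx
    have h := (hd2 x hx).hasDerivAt
    have heq : deriv g x = a * g x - Ψ (θ x) := by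
      have := hode x hx
      linear_combination this - ha_def * g x
    rwa [heq] at h
  -- continuity of θ and g at positive points
  have hθc : ∀ x > (0:ℝ), ContinuousAt θ x := fun x hx => (hd1 x hx).continuousAt
  have hgc : ∀ x > (0:ℝ), ContinuousAt g x := fun x hx => (hd2 x hx).continuousAt
  -- the auxiliary function φ = exp(-a x) * g x is antitone on (0, ∞)
  set φ : ℝ → ℝ := fun x => Real.exp (-(a * x)) * g x with hφ_def
  have hφ' : ∀ x > (0:ℝ), HasDerivAt φ (-(Real.exp (-(a * x)) * Ψ (θ x))) x := by
    intro x hx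
    have h1 : HasDerivAt (fun x : ℝ => Real.exp (-(a * x))) (Real.exp (-(a * x)) * -a) x := by
      have : HasDerivAt (fun x : ℝ => -(a * x)) (-a) x := by
        simpa using ((hasDerivAt_id x).const_mul (-a))
      exact (Real.hasDerivAt_exp _).comp x this
    have h2 := h1.mul (hg' x hx)
    exact h2.congr_deriv (by ring)
  have hφanti : ∀ ⦃x y : ℝ⦄, 0 < x → x ≤ y → φ y ≤ φ x := by
    intro x y hx hxy
    have h := antitoneOn_of_deriv_nonpos (convex_Icc x y)
      (fun z hz => ((hφ' z (lt_of_lt_of_le hx hz.1)).continuousAt).continuousWithinAt)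
      (fun z hz => ((hφ' z (lt_of_lt_of_le hx (interior_subset hz).1)).differentiableAt).differentiableWithinAt)
      (fun z hz => by
        rw [interior_Icc] at hz
        rw [(hφ' z (lt_of_lt_of_le hx hz.1.le)).deriv]
        have := mul_nonneg (Real.exp_pos (-(a * z))).le (hΨnn (θ z))
        linarith)
    exact h (left_mem_Icc.2 hxy) (right_mem_Icc.2 hxy) hxy
  -- key fact: if g x0 ≤ 0 at a positive point, then θ x0 ≥ 1
  have key : ∀ x0 > (0:ℝ), g x0 ≤ 0 → 1 ≤ θ x0 := by
    intro x0 hx0 hgx0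
    have hgle : ∀ y, x0 ≤ y → g y ≤ 0 := by
      intro y hy
      have h1 : φ y ≤ φ x0 := hφanti hx0 hy
      have h2 : φ x0 ≤ 0 := mul_nonpos_of_nonneg_of_nonpos (Real.exp_pos _).le hgx0
      have h4 : Real.exp (-(a * y)) * g y ≤ 0 := h1.trans h2
      nlinarith [Real.exp_pos (-(a * y))]
    have hanti : AntitoneOn θ (Ici x0) := by
      refine antitoneOn_of_deriv_nonpos (convex_Ici x0)
        (hcont.mono (Ici_subset_Ici.2 hx0.le)) ?_ ?_
      · intro z hz
        rw [interior_Ici] at hz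
        exact (hd1 z (hx0.trans hz)).differentiableWithinAt
      · intro z hz
        rw [interior_Ici] at hz
        exact hgle z hz.le
    refine le_of_tendsto hlim ?_
    filter_upwards [eventually_ge_atTop x0] with y hy
    exact hanti (self_mem_Ici) hy hy
  -- slope lemma: if θ < 1 strictly to the left of x1 > 0 and θ x1 = 1, then g x1 ≥ 0
  have slope_pos : ∀ x1 > (0:ℝ), (∀ x, 0 ≤ x → x < x1 → θ x < 1) → θ x1 = 1 → 0 ≤ g x1 := by
    intro x1 hx1 hbelow hθ1
    by_contra hneg
    push_neg at hneg
    have hslope := hasDerivAt_iff_tendsto_slope.1 (hθ' x1 hx1)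
    have h1 : ∀ᶠ x in 𝓝[<] x1, slope θ x1 x < 0 := by
      have : 𝓝[<] x1 ≤ 𝓝[≠] x1 := nhdsWithin_mono _ (fun x hx => ne_of_lt hx)
      exact (hslope.mono_left this).eventually (eventually_lt_nhds hneg)
    have h2 : Ioo 0 x1 ∈ 𝓝[<] x1 := Ioo_mem_nhdsLT_of_mem ⟨hx1, le_rfl⟩
    obtain ⟨x, hs, hx⟩ := (h1.and (eventually_of_mem h2 (fun x hx => hx))).exists
    have hxlt : x - x1 < 0 := by linarith [hx.2]
    have hsl : (θ x - θ x1) / (x - x1) < 0 := by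
      have := hs
      rwa [slope_def_field] at this
    have hpos : 0 < θ x - θ x1 := by
      rcases div_neg_iff.1 hsl with ⟨hp, hn⟩ | ⟨hn2, hp2⟩
      · exact hp
      · linarith
    have := hbelow x hx.1.le hx.2
    rw [hθ1] at hpos
    linarith
  -- the easy/main case split
  by_cases hgpos : ∀ x > (0:ℝ), 0 < g x
  · -- the good case: derive all conclusions
    have mono : StrictMonoOn θ (Ici 0) := by
      refine strictMonoOn_of_deriv_pos (convex_Ici 0) hcont ?_
      rw [interior_Ici]
      exact fun x hx => hgpos x hx
    have hle1 : ∀ x ≥ (0:ℝ), θ x ≤ 1 := by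
      intro x hx
      refine ge_of_tendsto hlim ?_
      filter_upwards [eventually_ge_atTop x] with y hy
      exact mono.monotoneOn hx (hx.trans hy) hy
    have hlt1 : ∀ x ≥ (0:ℝ), θ x < 1 := by
      intro x hx
      have h1 : θ x < θ (x + 1) := mono hx (by simp only [mem_Ici]; linarith) (lt_add_one x)
      have h2 : θ (x + 1) ≤ 1 := hle1 (x + 1) (by linarith)
      linarith
    refine ⟨hgpos, mono, hlt1, ?_, mono.injOn, ?_⟩
    · -- MapsTo
      intro x hx
      refine ⟨?_, hlt1 x hx⟩
      rw [← h0]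
      exact mono.monotoneOn self_mem_Ici hx hx
    · -- SurjOn
      intro y hy
      obtain ⟨X, hyX, hX0⟩ : ∃ X, y < θ X ∧ (0:ℝ) ≤ X :=
        ((hlim.eventually (eventually_gt_nhds hy.2)).and (eventually_ge_atTop 0)).exists
      obtain ⟨x, hx, hθx⟩ := intermediate_value_Icc hX0 (hcont.mono Icc_subset_Ici_self)
        ⟨by rw [h0]; exact hy.1, hyX.le⟩
      exact ⟨x, hx.1, hθx⟩
  · -- the impossible case
    exfalso
    push_neg at hgpos
    obtain ⟨x0, hx0, hgx0⟩ := hgpos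
    have hθx0 : 1 ≤ θ x0 := key x0 hx0 hgx0
    -- there is a point where θ equals 1
    obtain ⟨z, hzmem, hθz⟩ : ∃ z ∈ Icc (0:ℝ) x0, θ z = 1 :=
      intermediate_value_Icc hx0.le (hcont.mono Icc_subset_Ici_self)
        ⟨by rw [h0]; linarith, hθx0⟩
    -- the first such point
    set S := {x ∈ Icc (0:ℝ) z | θ x = 1} with hS_def
    have hSne : S.Nonempty := ⟨z, ⟨⟨hzmem.1, le_rfl⟩, hθz⟩⟩
    have hSbdd : BddBelow S := ⟨0, fun x hx => hx.1.1⟩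
    have hSclosed : IsClosed S := by
      have : S = Icc (0:ℝ) z ∩ θ ⁻¹' {1} := by
        ext x; simp [hS_def, Set.mem_sep_iff]
      rw [this]
      exact (hcont.mono Icc_subset_Ici_self).preimage_isClosed_of_isClosed isClosed_Icc
        isClosed_singleton
    set x1 := sInf S with hx1_def
    have hx1S : x1 ∈ S := hSclosed.csInf_mem hSne hSbdd
    have hθ1 : θ x1 = 1 := hx1S.2
    have hx1pos : 0 < x1 := by
      rcases hx1S.1.1.lt_or_eq with h | h
      · exact h
      · exfalso; rw [← h, h0] at hθ1; linarith
    have hbelow : ∀ x, 0 ≤ x → x < x1 → θ x < 1 := by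
      intro x hx hxlt
      by_contra hge
      push_neg at hge
      obtain ⟨w, hw, hθw⟩ := intermediate_value_Icc hx (hcont.mono Icc_subset_Ici_self)
        ⟨by rw [h0]; linarith, hge⟩
      have hwz : w ≤ z := le_trans hw.2 (le_trans hxlt.le hx1S.1.2)
      have hwS : w ∈ S := ⟨⟨hw.1, hwz⟩, hθw⟩
      have := csInf_le hSbdd hwS
      linarith [hw.2]
    have hg1nonneg : 0 ≤ g x1 := slope_pos x1 hx1pos hbelow hθ1
    -- a growth lemma used for the g x1 > 0 case
    have grow : 0 < g x1 → ∀ y, x1 < y → (∀ x ∈ Icc x1 y, 1 ≤ θ x) →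
        StrictMonoOn θ (Icc x1 y) := by
      intro hgx1 y hy hge1
      -- φ has zero derivative on (x1, y), hence is monotone there
      have hφmono : MonotoneOn φ (Icc x1 y) := by
        refine monotoneOn_of_deriv_nonneg (convex_Icc x1 y)
          (fun zz hz => ((hφ' zz (lt_of_lt_of_le hx1pos hz.1)).continuousAt).continuousWithinAt)
          (fun zz hz => ((hφ' zz
            (lt_of_lt_of_le hx1pos (interior_subset hz).1)).differentiableAt).differentiableWithinAt)
          ?_
        intro zz hz
        rw [interior_Icc] at hz
        rw [(hφ' zz (lt_of_lt_of_le hx1pos hz.1.le)).deriv]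
        have h1 : Ψ (θ zz) = 0 := hΨzero _ (hge1 zz ⟨hz.1.le, hz.2.le⟩)
        rw [h1]
        simp
      have hgpos' : ∀ x ∈ Icc x1 y, 0 < g x := by
        intro x hx
        have h1 : φ x1 ≤ φ x := hφmono (left_mem_Icc.2 hy.le) hx hx.1
        have h2 : (0:ℝ) < Real.exp (-(a * x1)) * g x1 :=
          mul_pos (Real.exp_pos _) hgx1
        have h3 : (0:ℝ) < Real.exp (-(a * x)) * g x := lt_of_lt_of_le h2 h1
        nlinarith [Real.exp_pos (-(a * x))]
      refine strictMonoOn_of_deriv_pos (convex_Icc x1 y)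
        (fun zz hz => (hθc zz (lt_of_lt_of_le hx1pos hz.1)).continuousWithinAt) ?_
      intro zz hz
      rw [interior_Icc] at hz
      exact hgpos' zz ⟨hz.1.le, hz.2.le⟩
    have hg1nonpos : g x1 ≤ 0 := by
      by_contra hpos'
      push_neg at hpos'
      -- θ > 1 just to the right of x1
      have hslope := hasDerivAt_iff_tendsto_slope.1 (hθ' x1 hx1pos)
      have h1 : ∀ᶠ x in 𝓝[>] x1, 0 < slope θ x1 x := by
        have hmono : 𝓝[>] x1 ≤ 𝓝[≠] x1 := nhdsWithin_mono _ (fun x hx => ne_of_gt hx)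
        exact (hslope.mono_left hmono).eventually (eventually_gt_nhds hpos')
      have h2 : ∀ᶠ x in 𝓝[>] x1, 1 < θ x := by
        filter_upwards [h1, self_mem_nhdsWithin] with x hsx hxx
        rw [slope_def_field] at hsx
        have hd : 0 < x - x1 := sub_pos.2 hxx
        have : 0 < θ x - θ x1 := by
          have := mul_pos hsx hd
          rwa [div_mul_cancel₀] at this
          linarith
        rw [hθ1] at this; linarith
      obtain ⟨u, hu, huprop⟩ := mem_nhdsGT_iff_exists_Ioc_subset.1 h2
      rw [mem_Ioi] at hu
      have hθu : 1 < θ u := huprop ⟨hu, le_rfl⟩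
      -- either θ ≥ 1 forever, or there is a later point of return to 1
      by_cases hall : ∀ x, x1 ≤ x → 1 ≤ θ x
      · -- θ increasing beyond any bound of the form θ (x1+1) > 1: contradicts the limit
        have hsm : ∀ w, x1 + 1 ≤ w → θ (x1 + 1) ≤ θ w := by
          intro w hw
          have h3 := grow hpos' w (by linarith)
            (fun x hx => hall x hx.1)
          exact (h3.monotoneOn) ⟨by linarith, hw⟩ ⟨by linarith, le_rfl⟩ hw
        have hlim2 : θ (x1 + 1) ≤ 1 := by
          refine ge_of_tendsto hlim ?_
          filter_upwards [eventually_ge_atTop (x1 + 1)] with w hw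
          exact hsm w hw
        have h4 := grow hpos' (x1 + 1) (by linarith) (fun x hx => hall x hx.1)
        have h5 : θ x1 < θ (x1 + 1) := h4 (left_mem_Icc.2 (by linarith))
          (right_mem_Icc.2 (by linarith)) (by linarith)
        rw [hθ1] at h5; linarith
      · push_neg at hall
        obtain ⟨y, hyx1, hθy⟩ := hall
        -- y is past u since θ > 1 on (x1, u]
        have hyu : u < y := by
          by_contra hyu
          push_neg at hyu
          rcases eq_or_lt_of_le hyx1 with h | h
          · rw [← h, hθ1] at hθy; linarith
          · exact absurd hθy (not_lt.2 (huprop ⟨h, hyu⟩).le)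
        -- first return point x2
        set B := {x ∈ Icc u y | θ x ≤ 1} with hB_def
        have hBne : B.Nonempty := ⟨y, ⟨⟨hyu.le, le_rfl⟩, hθy.le⟩⟩
        have hBbdd : BddBelow B := ⟨u, fun x hx => hx.1.1⟩
        have hBclosed : IsClosed B := by
          have : B = Icc u y ∩ θ ⁻¹' (Iic 1) := by
            ext x; simp [hB_def, Set.mem_sep_iff]
          rw [this]
          refine (hcont.mono ?_).preimage_isClosed_of_isClosed isClosed_Icc isClosed_Iic
          intro x hx
          have : (0:ℝ) < u := lt_trans hx1pos hu
          exact le_trans this.le hx.1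
        set x2 := sInf B with hx2_def
        have hx2B : x2 ∈ B := hBclosed.csInf_mem hBne hBbdd
        have hx2u : u < x2 := by
          rcases hx2B.1.1.lt_or_eq with h | h
          · exact h
          · exfalso; rw [h] at hθu; exact absurd hx2B.2 (not_le.2 hθu)
        have hθge : ∀ x ∈ Icc x1 x2, 1 ≤ θ x := by
          intro x hx
          rcases eq_or_lt_of_le hx.1 with h | h
          · exact (show θ x = (1:ℝ) by rw [← h, hθ1]).ge
          · rcases le_or_gt x u with h2 | h2
            · exact (huprop ⟨h, h2⟩).le
            · rcases eq_or_lt_of_le hx.2 with h3 | h3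
              · -- x = x2 : limit from the left
                rw [h3]
                have htd : Tendsto θ (𝓝[<] x2) (𝓝 (θ x2)) :=
                  ((hθc x2 (lt_trans (lt_trans hx1pos hu) hx2u)).continuousWithinAt)
                refine ge_of_tendsto htd ?_
                filter_upwards [Ioo_mem_nhdsLT_of_mem (⟨hx2u, le_rfl⟩ : x2 ∈ Ioc u x2)]
                  with w hw
                have hwnB : w ∉ B := fun hwB => absurd (csInf_le hBbdd hwB) (by
                  push_neg
                  exact hw.2)
                have hwmem : w ∈ Icc u y := ⟨hw.1.le, le_trans hw.2.le hx2B.1.2⟩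
                by_contra hcon
                push_neg at hcon
                exact hwnB ⟨hwmem, hcon.le⟩
              · -- u < x < x2 : not in B
                have hxnB : x ∉ B := fun hxB => absurd (csInf_le hBbdd hxB) (by
                  push_neg; exact h3)
                have hxmem : x ∈ Icc u y := ⟨h2.le, le_trans hx.2 hx2B.1.2⟩
                by_contra hcon
                push_neg at hcon
                exact hxnB ⟨hxmem, hcon.le⟩
        have h6 := grow hpos' x2 (lt_trans hu hx2u) hθge
        have h7 : θ x1 < θ x2 := h6 (left_mem_Icc.2 (lt_trans hu hx2u).le)
          (right_mem_Icc.2 (lt_trans hu hx2u).le) (lt_trans hu hx2u)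
        rw [hθ1] at h7
        have hθx2 : θ x2 ≤ 1 := hx2B.2
        linarith
    have hg1 : g x1 = 0 := le_antisymm hg1nonpos hg1nonneg
    -- backward uniqueness of the ODE: θ ≡ 1 slightly to the left of x1, contradiction
    obtain ⟨K, t, htmem, hlips⟩ := hΨlip 1
    obtain ⟨r, hr, hball⟩ := Metric.mem_nhds_iff.1 htmem
    set v : ℝ → ℝ × ℝ → ℝ × ℝ := fun _ p => (p.2, a * p.2 - Ψ p.1) with hv_def
    set sb : ℝ → Set (ℝ × ℝ) := fun _ => {p : ℝ × ℝ | p.1 ∈ Metric.ball (1:ℝ) r} with hsb_def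
    set Kv : ℝ≥0 := 1 + K + ⟨a, ha.le⟩ with hKv_def
    have hKc : (Kv : ℝ) = 1 + (K : ℝ) + a := by
      rw [hKv_def]; push_cast; rfl
    have hKv' : ∀ tt : ℝ, LipschitzOnWith Kv (v tt) (sb tt) := by
      intro tt
      rw [lipschitzOnWith_iff_dist_le_mul]
      intro p hp q hq
      have hΨd : dist (Ψ p.1) (Ψ q.1) ≤ (K : ℝ) * dist p.1 q.1 :=
        (lipschitzOnWith_iff_dist_le_mul.1 hlips) p.1 (hball hp) q.1 (hball hq)
      have hd1 : dist p.1 q.1 ≤ dist p q := by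
        rw [Prod.dist_eq]; exact le_max_left _ _
      have hd2 : dist p.2 q.2 ≤ dist p q := by
        rw [Prod.dist_eq]; exact le_max_right _ _
      have hds : (0:ℝ) ≤ dist p q := dist_nonneg
      have hKnn : (0:ℝ) ≤ (K : ℝ) := K.coe_nonneg
      have hd1nn : (0:ℝ) ≤ dist p.1 q.1 := dist_nonneg
      have hd2nn : (0:ℝ) ≤ dist p.2 q.2 := dist_nonneg
      rw [Prod.dist_eq]
      refine max_le ?_ ?_
      · calc dist (v tt p).1 (v tt q).1 = dist p.2 q.2 := rfl
          _ ≤ dist p q := hd2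
          _ ≤ (Kv : ℝ) * dist p q := by rw [hKc]; nlinarith
      · have e1 : dist (a * p.2 - Ψ p.1) (a * q.2 - Ψ q.1) ≤
            dist (a * p.2) (a * q.2) + dist (Ψ p.1) (Ψ q.1) := dist_sub_sub_le _ _ _ _
        have e2 : dist (a * p.2) (a * q.2) = a * dist p.2 q.2 := by
          rw [Real.dist_eq, Real.dist_eq, ← mul_sub, abs_mul, abs_of_pos ha]
        calc dist (v tt p).2 (v tt q).2 = dist (a * p.2 - Ψ p.1) (a * q.2 - Ψ q.1) := rfl
          _ ≤ dist (a * p.2) (a * q.2) + dist (Ψ p.1) (Ψ q.1) := e1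
          _ ≤ a * dist p.2 q.2 + (K : ℝ) * dist p.1 q.1 := by rw [e2]; linarith
          _ ≤ (Kv : ℝ) * dist p q := by rw [hKc]; nlinarith
    set F : ℝ → ℝ × ℝ := fun x => (θ x, g x) with hF_def
    have hF' : ∀ x > (0:ℝ), HasDerivAt F (v x (F x)) x :=
      fun x hx => (hθ' x hx).prodMk (hg' x hx)
    have hFx1 : F x1 = ((1:ℝ), (0:ℝ)) := by
      rw [hF_def]; simp only [Prod.mk.injEq]; exact ⟨hθ1, hg1⟩
    have hFcont : ContinuousAt F x1 := (hθc x1 hx1pos).prodMk (hgc x1 hx1pos)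
    have hmem : ∀ᶠ x in 𝓝 x1, F x ∈ sb x := by
      have hopen : IsOpen {p : ℝ × ℝ | p.1 ∈ Metric.ball (1:ℝ) r} :=
        (Metric.isOpen_ball).preimage continuous_fst
      have h2 : {p : ℝ × ℝ | p.1 ∈ Metric.ball (1:ℝ) r} ∈ 𝓝 (F x1) :=
        hopen.mem_nhds (by rw [hFx1]; exact Metric.mem_ball_self hr)
      exact hFcont.eventually_mem h2
    obtain ⟨ε, hε, hεprop⟩ := Metric.eventually_nhds_iff.1 hmem
    set x' := max (x1 / 2) (x1 - ε / 2) with hx'_def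
    have hx'pos : 0 < x' := lt_of_lt_of_le (half_pos hx1pos) (le_max_left _ _)
    have hx'lt : x' < x1 := max_lt (by linarith) (by linarith)
    have hin : ∀ x ∈ Icc x' x1, F x ∈ sb x := by
      intro x hx
      apply hεprop
      rw [Real.dist_eq, abs_of_nonpos (by linarith [hx.2])]
      have h3 : x1 - ε / 2 ≤ x' := le_max_right _ _
      have h4 := hx.1
      linarith
    have hunique : Set.EqOn F (fun _ => ((1:ℝ), (0:ℝ))) (Icc x' x1) := by
      refine ODE_solution_unique_of_mem_Icc_left (fun tt _ => hKv' tt) ?_ ?_ ?_ ?_ ?_ ?_ ?_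
      · intro x hx
        exact ((hθc x (lt_of_lt_of_le hx'pos hx.1)).prodMk
          (hgc x (lt_of_lt_of_le hx'pos hx.1))).continuousWithinAt
      · intro tt htt
        exact (hF' tt (lt_trans hx'pos htt.1)).hasDerivWithinAt
      · intro tt htt
        exact hin tt ⟨htt.1.le, htt.2⟩
      · exact continuousOn_const
      · intro tt htt
        have h5 : v tt ((1:ℝ), (0:ℝ)) = 0 := by
          simp [hv_def, hΨ1, Prod.ext_iff]
        rw [h5]
        exact hasDerivWithinAt_const _ _ _
      · intro tt htt
        show (1:ℝ) ∈ Metric.ball (1:ℝ) r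
        exact Metric.mem_ball_self hr
      · rw [hFx1]
    have hFx' : F x' = ((1:ℝ), (0:ℝ)) := hunique (left_mem_Icc.2 hx'lt.le)
    have hθx' : θ x' = 1 := congrArg Prod.fst hFx'
    exact absurd hθx' (ne_of_lt (hbelow x' hx'pos.le hx'lt))
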